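/- Let M be a path-connected metric space, let S ⊆ M be a nonempty subset equipped with the restricted metric, and let P : M → S be a distance nonincreasing (1-Lipschitz) map with P(s) = s for every s ∈ S, such that the composition of P with the inclusion S ↪ M is homotopic to the identity map of M. Then CovSpec(M) = CovSpec(S), where both covering spectra are computed with a basepoint s₀ ∈ S and with metric balls of the respective metric. (This applies in particular to the 1-Lipschitz Sharafutdinov retraction of a complete noncompact Alexandrov space of nonnegative curvature onto its soul, yielding CovSpec(M) = CovSpec(soul).) -/

import Mathlib

/- Common definitions: path length, length/geodesic spaces, δ-covering groups,
   covering spectra, cut-off covering groups and spectra, free homotopy,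
   loops-to-infinity. -/

open Metric Filter
open scoped NNReal ENNReal unitInterval

attribute [local instance] Path.Homotopic.setoid

/-- The length (total variation) of a path in a metric space. -/
noncomputable def pathLength {X : Type*} [MetricSpace X] {x y : X} (γ : Path x y) : ℝ≥0∞ :=
  eVariationOn γ Set.univ

/-- A metric space is a length space if the distance between any two points is the
infimum of the lengths of paths joining them. -/
def IsLengthSpace (X : Type*) [MetricSpace X] : Prop :=
  ∀ x y : X, ENNReal.ofReal (dist x y) = ⨅ γ : Path x y, pathLength γ

/-- A metric space is a geodesic space if any two points are joined by a
distance-realizing path. -/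
def IsGeodesicSpace (X : Type*) [MetricSpace X] : Prop :=
  ∀ x y : X, ∃ γ : Path x y, pathLength γ = ENNReal.ofReal (dist x y)

/-- The element of the fundamental group at `p` represented by the loop
`α⁻¹ · β · α` (i.e. follow `α` from `p` to `y`, the loop `β` at `y`, then `α` back). -/
noncomputable def loopClass {X : Type*} [TopologicalSpace X] {p y : X}
    (α : Path p y) (β : Path y y) : FundamentalGroup X p :=
  FundamentalGroup.fromPath (X := TopCat.of X) ⟦(α.trans β).trans α.symm⟧

/-- The δ-covering group `π₁(X, δ, p)`: the normal subgroup of `π₁(X,p)` generated by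
classes of loops `α⁻¹·β·α` with `β` lying in some open ball of radius `δ`. -/
noncomputable def coveringGroup (X : Type*) [MetricSpace X] (p : X) (δ : ℝ) :
    Subgroup (FundamentalGroup X p) :=
  Subgroup.normalClosure
    {g | ∃ (y : X) (β : Path y y) (α : Path p y),
      (∃ c : X, ∀ t, β t ∈ Metric.ball c δ) ∧ g = loopClass α β}

/-- The covering spectrum of `X` (with basepoint `p`). -/
def covSpec (X : Type*) [MetricSpace X] (p : X) : Set ℝ :=
  {δ | 0 < δ ∧ ∀ δ' > δ, coveringGroup X p δ' ≠ coveringGroup X p δ}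

/-- The `R` cut-off δ-covering group `π₁^{cut}(X, δ, R, x)`: the normal subgroup of
`π₁(X,x)` generated by classes of loops `α⁻¹·β·α` with `β` lying in some open ball of
radius `δ` or in the complement of the closed ball `B̄(x,R)`. -/
noncomputable def cutCoveringGroup (X : Type*) [MetricSpace X] (x : X) (δ R : ℝ) :
    Subgroup (FundamentalGroup X x) :=
  Subgroup.normalClosure
    {g | ∃ (y : X) (β : Path y y) (α : Path x y),
      ((∃ c : X, ∀ t, β t ∈ Metric.ball c δ) ∨ (∀ t, β t ∉ Metric.closedBall x R)) ∧
      g = loopClass α β}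

/-- The `R` cut-off covering spectrum of `(X,x)`. -/
def cutCovSpec (X : Type*) [MetricSpace X] (x : X) (R : ℝ) : Set ℝ :=
  {δ | 0 < δ ∧ ∀ δ' > δ, cutCoveringGroup X x δ' R ≠ cutCoveringGroup X x δ R}

/-- Two loops are freely homotopic: there is a homotopy through (not necessarily
based) loops from one to the other. -/
def FreelyHomotopic {X : Type*} [TopologicalSpace X] {a b : X}
    (γ₀ : Path a a) (γ₁ : Path b b) : Prop :=
  ∃ H : C(I × I, X),
    (∀ t, H (0, t) = γ₀ t) ∧ (∀ t, H (1, t) = γ₁ t) ∧ ∀ s, H (s, 0) = H (s, 1)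

/-- Two loops are freely homotopic within a subset `A`: the homotopy stays in `A`. -/
def FreelyHomotopicIn {X : Type*} [TopologicalSpace X] (A : Set X) {a b : X}
    (γ₀ : Path a a) (γ₁ : Path b b) : Prop :=
  ∃ H : C(I × I, X),
    (∀ t, H (0, t) = γ₀ t) ∧ (∀ t, H (1, t) = γ₁ t) ∧ (∀ s, H (s, 0) = H (s, 1)) ∧
    ∀ p, H p ∈ A

/-- A loop has the loops-to-infinity property: for every compact set it is freely
homotopic to a loop outside that set. -/
def LoopToInfinity {X : Type*} [TopologicalSpace X] {a : X} (γ : Path a a) : Prop :=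
  ∀ K : Set X, IsCompact K →
    ∃ (b : X) (η : Path b b), (∀ t, η t ∉ K) ∧ FreelyHomotopic γ η

/-- A space has the loops-to-infinity property if all of its loops do. -/
def LoopsToInfinity (X : Type*) [TopologicalSpace X] : Prop :=
  ∀ (a : X) (γ : Path a a), LoopToInfinity γ

/-- Concatenation of a finite list of loops based at `q`. -/
noncomputable def loopConcat {X : Type*} [TopologicalSpace X] (q : X) :
    List (Path q q) → Path q q
  | [] => Path.refl q
  | γ :: rest => γ.trans (loopConcat q rest)

/-- A space is semilocally simply connected if every point has a neighborhood in which
every loop is null-homotopic in the whole space. -/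
def SemilocallySimplyConnected (X : Type*) [TopologicalSpace X] : Prop :=
  ∀ x : X, ∃ U ∈ nhds x, ∀ (y : X) (γ : Path y y), (∀ t, γ t ∈ U) →
    γ.Homotopic (Path.refl y)

/-- A pointed ε-Hausdorff approximation. -/
def IsPointedHausdorffApprox {Z₁ Z₂ : Type*} [MetricSpace Z₁] [MetricSpace Z₂]
    (f : Z₁ → Z₂) (p₁ : Z₁) (p₂ : Z₂) (ε : ℝ) : Prop :=
  f p₁ = p₂ ∧ (∀ a b : Z₁, |dist (f a) (f b) - dist a b| < ε) ∧
    ∀ z : Z₂, ∃ a : Z₁, dist z (f a) ≤ ε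

instance coveringGroup_normal (X : Type*) [MetricSpace X] (p : X) (δ : ℝ) :
    (coveringGroup X p δ).Normal :=
  Subgroup.normalClosure_normal

instance cutCoveringGroup_normal (X : Type*) [MetricSpace X] (x : X) (δ R : ℝ) :
    (cutCoveringGroup X x δ R).Normal :=
  Subgroup.normalClosure_normal

section AuxCovSpec

open CategoryTheory FundamentalGroupoid
open scoped FundamentalGroupoid

universe u

noncomputable def FGcast {Y : Type u} [TopologicalSpace Y] {a b : Y} (h : a = b) :
    FundamentalGroup Y a ≃* FundamentalGroup Y b := h ▸ MulEquiv.refl _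

noncomputable def piFun {X Y : Type u} [TopologicalSpace X] [TopologicalSpace Y]
    (f : C(X, Y)) : FundamentalGroupoid X ⥤ FundamentalGroupoid Y :=
  FundamentalGroupoid.map f

noncomputable def indHom {X Y : Type u} [TopologicalSpace X] [TopologicalSpace Y]
    (f : C(X, Y)) {x : X} {y : Y} (h : f x = y) :
    FundamentalGroup X x →* FundamentalGroup Y y :=
  (FGcast h).toMonoidHom.comp (Functor.mapEnd (FundamentalGroupoid.mk x) (piFun f))

lemma FundamentalGroup.ext' {X : Type u} [TopologicalSpace X] {x : X}
    {a b : FundamentalGroup X x} (h : a.toArrow = b.toArrow) : a = b := h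

lemma indHom_hom {X Y : Type u} [TopologicalSpace X] [TopologicalSpace Y]
    (f : C(X, Y)) {x : X} {y : Y} (h : f x = y) (a : FundamentalGroup X x) :
    (indHom f h a).toArrow =
      eqToHom (show FundamentalGroupoid.mk y = FundamentalGroupoid.mk (f x) by rw [h]) ≫
      (piFun f).map a.toArrow ≫
      eqToHom (show FundamentalGroupoid.mk (f x) = FundamentalGroupoid.mk y by rw [h]) := by
  subst h
  simp [indHom, FGcast]
  exact (Category.comp_id ((piFun f).map a.toArrow)).symm

lemma indHom_loopClass {X Y : Type u} [TopologicalSpace X] [TopologicalSpace Y]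
    (f : C(X, Y)) {x : X} {y : Y} (h : f x = y) {z : X} (α : Path x z) (β : Path z z) :
    indHom f h (loopClass α β) =
      loopClass ((α.map f.continuous).cast h.symm rfl) (β.map f.continuous) := by
  subst h
  apply FundamentalGroup.ext'
  show (piFun f).map ⟦(α.trans β).trans α.symm⟧ = _
  have : (piFun f).map ⟦(α.trans β).trans α.symm⟧ =
      ⟦((α.trans β).trans α.symm).map f.continuous⟧ := rfl
  rw [this]
  show _ = (⟦_⟧ : Path.Homotopic.Quotient _ _)
  congr 1
  rw [Path.cast_rfl_rfl, Path.map_trans, Path.map_trans, Path.map_symm]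

lemma indHom_comp_apply {X Y Z : Type u} [TopologicalSpace X] [TopologicalSpace Y]
    [TopologicalSpace Z] (f : C(X, Y)) (g : C(Y, Z)) {x : X} {y : Y} {z : Z}
    (hf : f x = y) (hg : g y = z) (a : FundamentalGroup X x) :
    indHom g hg (indHom f hf a) =
      indHom (g.comp f) (by rw [ContinuousMap.comp_apply, hf, hg]) a := by
  subst hf; subst hg
  apply FundamentalGroup.ext'
  show (piFun g).map ((piFun f).map a.toArrow) = (piFun (g.comp f)).map a.toArrow
  refine Quotient.inductionOn (a.toArrow) (fun γ => ?_)
  show (⟦_⟧ : Path.Homotopic.Quotient _ _) = ⟦_⟧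
  congr 1

lemma indHom_congr {X Y : Type u} [TopologicalSpace X] [TopologicalSpace Y]
    {f f' : C(X, Y)} (hff' : f = f') {x : X} {y : Y} (h : f x = y) (h' : f' x = y)
    (a : FundamentalGroup X x) : indHom f h a = indHom f' h' a := by subst hff'; rfl

lemma indHom_id {X : Type u} [TopologicalSpace X] {x : X}
    (h : ContinuousMap.id X x = x) (a : FundamentalGroup X x) :
    indHom (ContinuousMap.id X) h a = a := by
  apply FundamentalGroup.ext'
  show (piFun (ContinuousMap.id X)).map a.toArrow = a.toArrow
  refine Quotient.inductionOn (a.toArrow) (fun γ => ?_)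
  show (⟦_⟧ : Path.Homotopic.Quotient _ _) = ⟦_⟧
  congr 1

lemma indHom_eq_conj {X : Type u} [TopologicalSpace X] {f g : C(X, X)}
    (H : ContinuousMap.Homotopy f g) {x : X} (hf : f x = x) (hg : g x = x) :
    ∃ τ : FundamentalGroup X x, ∀ a, indHom g hg a = τ * indHom f hf a * τ⁻¹ := by
  let ν := FundamentalGroupoidFunctor.homotopicMapsNatIso (X := TopCat.of X) (Y := TopCat.of X) H
  let e : FundamentalGroupoid.mk (f x) ⟶ FundamentalGroupoid.mk (g x) := ν.app ⟨x⟩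
  have E1 : FundamentalGroupoid.mk x = FundamentalGroupoid.mk (f x) := by rw [hf]
  have E2 : FundamentalGroupoid.mk (g x) = FundamentalGroupoid.mk x := by rw [hg]
  refine ⟨FundamentalGroup.fromArrow (X := TopCat.of X) (eqToHom E1 ≫ e ≫ eqToHom E2),
    fun a => ?_⟩
  apply FundamentalGroup.ext'
  have hnat : (piFun f).map a.toArrow ≫ e = e ≫ (piFun g).map a.toArrow := ν.naturality a.toArrow
  show (indHom g hg a).toArrow = Groupoid.inv (eqToHom E1 ≫ e ≫ eqToHom E2) ≫
    (indHom f hf a).toArrow ≫ (eqToHom E1 ≫ e ≫ eqToHom E2)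
  rw [indHom_hom, indHom_hom, Groupoid.inv_eq_inv]
  simp only [IsIso.inv_comp, inv_eqToHom, Category.assoc, eqToHom_trans, eqToHom_refl,
    Category.id_comp, Category.comp_id, eqToHom_trans_assoc]
  dsimp only [piFun, FundamentalGroupoid.map] at hnat ⊢
  simp [reassoc_of% hnat]

end AuxCovSpec

/-- If `P : M → S` is a 1-Lipschitz retraction of a path-connected
metric space onto a subset `S` (restricted metric) with `incl ∘ P` homotopic to the
identity of `M`, then the covering spectra of `M` and of `S` (computed at a basepoint
`s₀ ∈ S`) agree. -/
theorem covSpec_eq_of_lipschitz_retraction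
    {M : Type*} [MetricSpace M] [PathConnectedSpace M]
    (S : Set M) (P : M → S) (hP : LipschitzWith 1 P)
    (hretr : ∀ s : S, P (s : M) = s)
    (hhom : ContinuousMap.Homotopic
      (⟨fun m => ((P m : S) : M),
        continuous_subtype_val.comp hP.continuous⟩ : C(M, M))
      (ContinuousMap.id M))
    (s₀ : M) (hs₀ : s₀ ∈ S) :
    covSpec M s₀ = covSpec S ⟨s₀, hs₀⟩ := by
  classical
  let Pc : C(M, S) := ⟨fun m => P m, hP.continuous⟩
  let ιc : C(S, M) := ⟨Subtype.val, continuous_subtype_val⟩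
  have hPc : Pc s₀ = (⟨s₀, hs₀⟩ : S) := hretr ⟨s₀, hs₀⟩
  let Φ : FundamentalGroup M s₀ →* FundamentalGroup S ⟨s₀, hs₀⟩ := indHom Pc hPc
  let Ψ : FundamentalGroup S ⟨s₀, hs₀⟩ →* FundamentalGroup M s₀ := indHom ιc rfl
  have key1 : ∀ δ : ℝ,
      Subgroup.map Φ (coveringGroup M s₀ δ) ≤ coveringGroup S ⟨s₀, hs₀⟩ δ := by
    intro δ
    rw [Subgroup.map_le_iff_le_comap]
    haveI : ((coveringGroup S ⟨s₀, hs₀⟩ δ).comap Φ).Normal :=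
      (coveringGroup_normal S ⟨s₀, hs₀⟩ δ).comap Φ
    apply Subgroup.normalClosure_le_normal
    rintro g ⟨y, β, α, ⟨c, hc⟩, rfl⟩
    show loopClass α β ∈ Subgroup.comap Φ (coveringGroup S ⟨s₀, hs₀⟩ δ)
    rw [Subgroup.mem_comap]
    show indHom Pc hPc (loopClass α β) ∈ _
    rw [indHom_loopClass]
    apply Subgroup.subset_normalClosure
    refine ⟨Pc y, β.map Pc.continuous, _, ⟨Pc c, fun t => ?_⟩, rfl⟩
    rw [Metric.mem_ball]
    show dist (Pc (β t)) (Pc c) < δ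
    calc dist (Pc (β t)) (Pc c) ≤ 1 * dist (β t) c := hP.dist_le_mul _ _
    _ = dist (β t) c := one_mul _
    _ < δ := Metric.mem_ball.mp (hc t)
  have key2 : ∀ δ : ℝ,
      Subgroup.map Ψ (coveringGroup S ⟨s₀, hs₀⟩ δ) ≤ coveringGroup M s₀ δ := by
    intro δ
    rw [Subgroup.map_le_iff_le_comap]
    haveI : ((coveringGroup M s₀ δ).comap Ψ).Normal :=
      (coveringGroup_normal M s₀ δ).comap Ψ
    apply Subgroup.normalClosure_le_normal
    rintro g ⟨y, β, α, ⟨c, hc⟩, rfl⟩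
    show loopClass α β ∈ Subgroup.comap Ψ (coveringGroup M s₀ δ)
    rw [Subgroup.mem_comap]
    show indHom ιc rfl (loopClass α β) ∈ _
    rw [indHom_loopClass]
    apply Subgroup.subset_normalClosure
    refine ⟨(y : M), β.map ιc.continuous, _, ⟨(c : M), fun t => ?_⟩, rfl⟩
    rw [Metric.mem_ball]
    show dist ((β t : M)) (c : M) < δ
    rw [← Subtype.dist_eq]
    exact Metric.mem_ball.mp (hc t)
  have hcomp : Pc.comp ιc = ContinuousMap.id S := ContinuousMap.ext fun s => hretr s
  have key3 : ∀ K : Subgroup (FundamentalGroup S (⟨s₀, hs₀⟩ : S)),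
      Subgroup.map Φ (Subgroup.map Ψ K) = K := by
    intro K
    rw [Subgroup.map_map]
    have hid : Φ.comp Ψ = MonoidHom.id _ := by
      ext k
      show Φ (Ψ k) = k
      exact (indHom_comp_apply ιc Pc rfl hPc k).trans ((indHom_congr hcomp _ rfl k).trans (indHom_id rfl k))
    rw [hid, Subgroup.map_id]
  have hq : (ιc.comp Pc : C(M, M)) s₀ = s₀ := by
    show ((Pc s₀ : S) : M) = s₀
    rw [hPc]
  have key4 : ∀ N : Subgroup (FundamentalGroup M s₀), N.Normal →
      Subgroup.map Ψ (Subgroup.map Φ N) = N := by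
    intro N hN
    rw [Subgroup.map_map]
    have hmapeq : (⟨fun m => ((P m : S) : M),
        continuous_subtype_val.comp hP.continuous⟩ : C(M, M)) = ιc.comp Pc :=
      ContinuousMap.ext fun m => rfl
    obtain ⟨Hh⟩ := hhom
    rw [hmapeq] at Hh
    obtain ⟨τ, hτ⟩ := indHom_eq_conj Hh hq rfl
    have hconj : ∀ a, (Ψ.comp Φ) a = τ⁻¹ * a * τ := by
      intro a
      have h1 := hτ a
      replace h1 := (indHom_id _ a).symm.trans h1
      have h2 : (Ψ.comp Φ) a = indHom (ιc.comp Pc) hq a := by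
        show Ψ (Φ a) = _
        exact indHom_comp_apply Pc ιc hPc rfl a
      rw [h2]
      have h3 : τ⁻¹ * a * τ = τ⁻¹ * (τ * (indHom (ιc.comp Pc) hq) a * τ⁻¹) * τ := by
        rw [← h1]
      rw [h3]
      group
    ext g
    simp only [Subgroup.mem_map]
    constructor
    · rintro ⟨a, ha, rfl⟩
      rw [hconj a]
      simpa using hN.conj_mem a ha τ⁻¹
    · intro hg
      refine ⟨τ * g * τ⁻¹, hN.conj_mem g hg τ, ?_⟩
      rw [hconj]
      group
  have eqS : ∀ δ : ℝ,
      Subgroup.map Φ (coveringGroup M s₀ δ) = coveringGroup S ⟨s₀, hs₀⟩ δ := by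
    intro δ
    refine le_antisymm (key1 δ) ?_
    conv_lhs => rw [← key3 (coveringGroup S ⟨s₀, hs₀⟩ δ)]
    exact Subgroup.map_mono (key2 δ)
  have eqM : ∀ δ : ℝ,
      Subgroup.map Ψ (coveringGroup S ⟨s₀, hs₀⟩ δ) = coveringGroup M s₀ δ := by
    intro δ
    refine le_antisymm (key2 δ) ?_
    conv_lhs => rw [← key4 (coveringGroup M s₀ δ) (coveringGroup_normal M s₀ δ)]
    exact Subgroup.map_mono (key1 δ)
  have main : ∀ δ δ' : ℝ, (coveringGroup M s₀ δ' = coveringGroup M s₀ δ) ↔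
      (coveringGroup S ⟨s₀, hs₀⟩ δ' = coveringGroup S ⟨s₀, hs₀⟩ δ) := by
    intro δ δ'
    constructor
    · intro h; rw [← eqS, ← eqS, h]
    · intro h; rw [← eqM, ← eqM, h]
  ext δ
  simp only [covSpec, Set.mem_setOf_eq]
  constructor
  · rintro ⟨h0, h⟩
    exact ⟨h0, fun δ' hδ' hc => h δ' hδ' ((main δ δ').mpr hc)⟩
  · rintro ⟨h0, h⟩
    exact ⟨h0, fun δ' hδ' hc => h δ' hδ' ((main δ δ').mp hc)⟩
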